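/- Let v_k = [v_{k-1}; v_k(φ_k) = μ_k] be an inductive valuation of K[x]. For every g ∈ K[x] with deg g < deg φ_{k+1} (when φ_{k+1} is a key polynomial of the next stage), the values stabilize: v_j(g) = v_k(g) for all j > k; in particular v_j(φ_k) = v_k(φ_k) for all j ≥ k. -/

import Mathlib

open Polynomial

variable {K : Type*} [Field K] {Γ : Type*} [AddCommGroup Γ] [LinearOrder Γ] [IsOrderedAddMonoid Γ]

/-- `g ∼_w h` : equivalence in the (pseudo-)valuation `w` (MacLane). -/
def EquivV {R : Type*} [CommRing R] (w : AddValuation R (WithTop Γ)) (g h : R) : Prop :=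
  min (w g) (w h) < w (g - h) ∨ (w g = ⊤ ∧ w h = ⊤)

/-- `φ` equivalence-divides `g` in `w`. -/
def EqDvd {R : Type*} [CommRing R] (w : AddValuation R (WithTop Γ)) (φ g : R) : Prop :=
  ∃ a : R, EquivV w g (a * φ)

/-- `φ` is equivalence irreducible in `w`. -/
def EqIrred {R : Type*} [CommRing R] (w : AddValuation R (WithTop Γ)) (φ : R) : Prop :=
  ∀ a b : R, EqDvd w φ (a * b) → EqDvd w φ a ∨ EqDvd w φ b

/-- `φ` is minimal in `w`. -/
def MinimalV (w : AddValuation (Polynomial K) (WithTop Γ)) (φ : Polynomial K) : Prop :=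
  ∀ g : Polynomial K, g ≠ 0 → EqDvd w φ g → φ.degree ≤ g.degree

/-- `φ` is a key polynomial over `w`. -/
def KeyOver (w : AddValuation (Polynomial K) (WithTop Γ)) (φ : Polynomial K) : Prop :=
  φ.Monic ∧ 0 < φ.degree ∧ EqIrred w φ ∧ MinimalV w φ

/-- `w = [u; w φ = μ]` is the augmented (inductive) valuation of MacLane: on the `φ`-adic
expansion `g = Σ cᵢ φ^i` (with `deg cᵢ < deg φ`) one has `w g = min ᵢ (u cᵢ + i μ)`. -/
def IsAugmentation (u w : AddValuation (Polynomial K) (WithTop Γ)) (φ : Polynomial K)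
    (μ : WithTop Γ) : Prop :=
  w φ = μ ∧
  ∀ (g : Polynomial K) (n : ℕ) (c : ℕ → Polynomial K),
    (∀ i, (c i).degree < φ.degree) → g = ∑ i ∈ Finset.range n, c i * φ ^ i →
    w g = (Finset.range n).inf fun i => u (c i) + i • μ

/-- The coefficients of the `φ`-adic expansion: `phiCoeff φ i g` is the coefficient of `φ^i`. -/
noncomputable def phiCoeff (φ : Polynomial K) : ℕ → Polynomial K → Polynomial K
  | 0, g => g %ₘ φ
  | (i+1), g => phiCoeff φ i (g /ₘ φ)

/-- The self-computation (inductiveness) property: `w` computes values of `φ`-adic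
expansions as the min of the values of the terms. -/
def ExpansionInf (w : AddValuation (Polynomial K) (WithTop Γ)) (φ : Polynomial K) : Prop :=
  ∀ (g : Polynomial K) (n : ℕ) (c : ℕ → Polynomial K),
    (∀ i, (c i).degree < φ.degree) → g = ∑ i ∈ Finset.range n, c i * φ ^ i →
    w g = (Finset.range n).inf fun i => w (c i * φ ^ i)

/-- Effective degree `D_φ(g)` with respect to `w`. -/
noncomputable def effDeg (w : AddValuation (Polynomial K) (WithTop Γ)) (φ g : Polynomial K) : ℕ :=
  sSup {i : ℕ | w g = w (phiCoeff φ i g * φ ^ i)}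

section Aux

variable {u v : AddValuation (Polynomial K) (WithTop Γ)} {φ ψ p : Polynomial K} {μ : WithTop Γ}

/-- If `deg g < deg φ`, the augmentation does not change the value of `g`. -/
lemma aug_small (h : IsAugmentation u v φ μ) (g : Polynomial K) (hg : g.degree < φ.degree) :
    v g = u g := by
  have := h.2 g 1 (fun _ => g) (fun _ => hg)
    (by simp [Finset.sum_range_one])
  simpa [Finset.range_one, zero_nsmul] using this

/-- The value of `c + φ` with `deg c < deg φ` under the augmentation. -/
lemma aug_two (h : IsAugmentation u v φ μ) (hφ : 0 < φ.degree)
    (c : Polynomial K) (hc : c.degree < φ.degree) :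
    v (c + φ) = min (u c) μ := by
  have hdeg : ∀ i : ℕ, ((if i = 0 then c else if i = 1 then 1 else 0 : Polynomial K)).degree
      < φ.degree := by
    intro i
    match i with
    | 0 => simpa using hc
    | 1 => simpa [Polynomial.degree_one] using hφ
    | (n+2) =>
      simp only [Nat.succ_ne_zero, if_false, Nat.succ.injEq, Nat.succ_ne_zero,
        Polynomial.degree_zero, if_neg (by omega : ¬ n + 2 = 0), if_neg (by omega : ¬ n + 2 = 1)]
      exact lt_of_le_of_lt bot_le hφ
  have hsum : c + φ = ∑ i ∈ Finset.range 2,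
      (if i = 0 then c else if i = 1 then 1 else 0 : Polynomial K) * φ ^ i := by
    simp [Finset.sum_range_succ, Finset.sum_range_one]
  have := h.2 (c + φ) 2 _ hdeg hsum
  rw [this]
  have h2 : Finset.range 2 = {0, 1} := by decide
  rw [h2]
  simp [Finset.inf_insert, Finset.inf_singleton, zero_nsmul, one_nsmul, u.map_one]

/-- `ψ` equivalence-divides `g` whenever the defining inequality holds (take `a = 1`). -/
lemma eqdvd_of_lt {g : Polynomial K} (H : min (v g) (v ψ) < v (g - ψ)) : EqDvd v ψ g :=
  ⟨1, by rw [one_mul]; exact Or.inl H⟩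

/-- The key lower bound: if `ψ` is minimal, monic, with `deg ψ = deg p`, `p` monic, then
`v p ≤ v (p - ψ)`. -/
lemma ge_aux (hmin : MinimalV v ψ) (hψ : ψ.Monic) (hp : p.Monic)
    (hd : ψ.degree = p.degree) : v p ≤ v (p - ψ) := by
  by_contra hlt
  push_neg at hlt
  have hq : v (ψ - p) = v (p - ψ) := v.map_sub_swap ψ p
  have hne : ψ - p ≠ 0 := by
    intro h0
    rw [h0, v.map_zero] at hq
    exact not_top_lt (hq ▸ hlt)
  have hdvd : EqDvd v ψ (ψ - p) := by
    refine eqdvd_of_lt ?_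
    have : ψ - p - ψ = -p := by ring
    rw [this, v.map_neg]
    exact lt_of_le_of_lt (min_le_left _ _) (hq ▸ hlt)
  have := hmin (ψ - p) hne hdvd
  have hlt' : (ψ - p).degree < ψ.degree :=
    Polynomial.degree_sub_lt hd.symm.symm hψ.ne_zero (by rw [hψ.leadingCoeff, hp.leadingCoeff])
  exact absurd this (not_le.mpr hlt')

end Aux

/-- **MacLane's stability, 3.13 of [M1].**  Let `w 0, w 1, w 2, …` be an
augmented sequence of inductive valuations of `K[x]`, where `w (i+1) = [w i; (φ (i+1)) ↦ μ (i+1)]`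
with `φ (i+1)` a key polynomial over `w i`, `μ (i+1) > w i (φ (i+1))`, nondecreasing degrees,
and `φ (i+2)` not equivalent to `φ (i+1)` in `w (i+1)`.  Then for every `g` with
`deg g < deg φ (k+1)` the values stabilize: `w j g = w k g` for all `j ≥ k`; in particular
`w j (φ (i+1)) = w (i+1) (φ (i+1))` for all `j ≥ i+1`. -/

theorem stmt_9 {K : Type*} [Field K] {Γ : Type*} [AddCommGroup Γ] [LinearOrder Γ] [IsOrderedAddMonoid Γ]
    (w : ℕ → AddValuation (Polynomial K) (WithTop Γ))
    (φ : ℕ → Polynomial K) (μ : ℕ → WithTop Γ)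
    (hkey : ∀ i, KeyOver (w i) (φ (i+1)))
    (hμ : ∀ i, w i (φ (i+1)) < μ (i+1))
    (hchain : ∀ i, IsAugmentation (w i) (w (i+1)) (φ (i+1)) (μ (i+1)))
    (hdeg : ∀ i, (φ (i+1)).degree ≤ (φ (i+2)).degree)
    (hne : ∀ i, ¬ EquivV (w (i+1)) (φ (i+2)) (φ (i+1))) :
    (∀ (k : ℕ) (g : Polynomial K), g.degree < (φ (k+1)).degree →
        ∀ j, k ≤ j → w j g = w k g) ∧
    (∀ i j, i + 1 ≤ j → w j (φ (i+1)) = w (i+1) (φ (i+1))) := by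
  -- monotonicity of degrees
  have hmono : Monotone fun n => (φ (n+1)).degree := monotone_nat_of_le_succ hdeg
  -- one-step stability for small degree
  have step : ∀ (j : ℕ) (g : Polynomial K), g.degree < (φ (j+1)).degree →
      w (j+1) g = w j g := fun j g hg => aug_small (hchain j) g hg
  -- Part 1
  have part1 : ∀ (k : ℕ) (g : Polynomial K), g.degree < (φ (k+1)).degree →
      ∀ j, k ≤ j → w j g = w k g := by
    intro k g hg j hkj
    induction j with
    | zero => obtain rfl : k = 0 := Nat.le_zero.mp hkj; rfl
    | succ j ih =>
      rcases eq_or_lt_of_le hkj with rfl | hlt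
      · rfl
      · have hkj' : k ≤ j := Nat.lt_succ_iff.mp hlt
        rw [step j g (lt_of_lt_of_le hg (hmono hkj')), ih hkj']
  refine ⟨part1, ?_⟩
  -- the invariant
  have inv : ∀ i j, i + 1 ≤ j → w j (φ (i+1)) = μ (i+1) ∧
      ((φ (i+1)).degree = (φ (j+1)).degree → w j (φ (i+1) - φ (j+1)) = μ (i+1)) := by
    intro i j hij
    induction j with
    | zero => omega
    | succ j ih =>
      rcases eq_or_lt_of_le hij with heq | hlt
      · -- base case : j + 1 = i + 1
        obtain rfl : i = j := by omega
        refine ⟨(hchain i).1, fun hd => ?_⟩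
        -- equal degrees : use hne and minimality
        have hle : w (i+1) (φ (i+1) - φ (i+2)) ≤ μ (i+1) := by
          have h1 := hne i
          simp only [EquivV, not_or, not_lt] at h1
          have := h1.1
          calc w (i+1) (φ (i+1) - φ (i+2)) = w (i+1) (φ (i+2) - φ (i+1)) :=
                (w (i+1)).map_sub_swap _ _
            _ ≤ min ((w (i+1)) (φ (i+2))) ((w (i+1)) (φ (i+1))) := this
            _ ≤ (w (i+1)) (φ (i+1)) := min_le_right _ _
            _ = μ (i+1) := (hchain i).1
        have hge : μ (i+1) ≤ w (i+1) (φ (i+1) - φ (i+2)) := by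
          have := ge_aux (hkey (i+1)).2.2.2 (hkey (i+1)).1 (hkey i).1 hd.symm
          rwa [(hchain i).1] at this
        exact le_antisymm hle hge
      · -- inductive step : i + 1 ≤ j
        have hij' : i + 1 ≤ j := Nat.lt_succ_iff.mp hlt
        obtain ⟨h1, h2⟩ := ih hij'
        have hdij : (φ (i+1)).degree ≤ (φ (j+1)).degree := hmono (by omega : i ≤ j)
        -- first clause
        have hw1 : w (j+1) (φ (i+1)) = μ (i+1) := by
          rcases lt_or_eq_of_le hdij with hlt' | heq'
          · rw [step j _ hlt', h1]
          · -- equal degrees at stage j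
            have hdj : w j (φ (i+1) - φ (j+1)) = μ (i+1) := h2 heq'
            have hdjdeg : (φ (i+1) - φ (j+1)).degree < (φ (j+1)).degree := by
              have := Polynomial.degree_sub_lt heq' (hkey i).1.ne_zero
                (by rw [(hkey i).1.leadingCoeff, (hkey j).1.leadingCoeff])
              rwa [← heq']
            have hexp := aug_two (hchain j) (hkey j).2.1 (φ (i+1) - φ (j+1)) hdjdeg
            rw [sub_add_cancel] at hexp
            have hjge : μ (i+1) ≤ w j (φ (j+1)) := by
              have htr := (w j).map_sub (φ (i+1)) (φ (i+1) - φ (j+1))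
              rw [sub_sub_cancel, h1, hdj, min_self] at htr
              exact htr
            have hμgt : μ (i+1) < μ (j+1) := lt_of_le_of_lt hjge (hμ j)
            rw [hexp, hdj, min_eq_left hμgt.le]
        refine ⟨hw1, fun hd2 => ?_⟩
        -- second clause : deg φ(i+1) = deg φ(j+2)
        have heq' : (φ (i+1)).degree = (φ (j+1)).degree :=
          le_antisymm hdij (by rw [hd2]; exact hdeg j)
        have hdj : w j (φ (i+1) - φ (j+1)) = μ (i+1) := h2 heq'
        have hdjdeg : (φ (i+1) - φ (j+1)).degree < (φ (j+1)).degree := by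
          have := Polynomial.degree_sub_lt heq' (hkey i).1.ne_zero
            (by rw [(hkey i).1.leadingCoeff, (hkey j).1.leadingCoeff])
          rwa [← heq']
        have hdj1 : w (j+1) (φ (i+1) - φ (j+1)) = μ (i+1) := by
          rw [step j _ hdjdeg, hdj]
        have hjge : μ (i+1) ≤ w j (φ (j+1)) := by
          have htr := (w j).map_sub (φ (i+1)) (φ (i+1) - φ (j+1))
          rw [sub_sub_cancel, h1, hdj, min_self] at htr
          exact htr
        have hμgt : μ (i+1) < μ (j+1) := lt_of_le_of_lt hjge (hμ j)
        -- lower bound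
        have hge : μ (i+1) ≤ w (j+1) (φ (i+1) - φ (j+2)) := by
          have := ge_aux (hkey (j+1)).2.2.2 (hkey (j+1)).1 (hkey i).1 hd2.symm
          rwa [hw1] at this
        -- upper bound
        have hle : w (j+1) (φ (i+1) - φ (j+2)) ≤ μ (i+1) := by
          by_contra hgt
          push_neg at hgt
          -- then φ(j+2) equivalence-divides φ(i+1) - φ(j+1), contradicting minimality
          have hne0 : φ (i+1) - φ (j+1) ≠ 0 := by
            intro h0
            rw [h0, (w (j+1)).map_zero] at hdj1
            exact not_top_lt (hdj1 ▸ hgt)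
          have hdvd : EqDvd (w (j+1)) (φ (j+2)) (φ (i+1) - φ (j+1)) := by
            refine eqdvd_of_lt ?_
            have hrw : φ (i+1) - φ (j+1) - φ (j+2) = (φ (i+1) - φ (j+2)) - φ (j+1) := by ring
            rw [hrw]
            have hbig : μ (i+1) < w (j+1) ((φ (i+1) - φ (j+2)) - φ (j+1)) := by
              have htr := (w (j+1)).map_sub (φ (i+1) - φ (j+2)) (φ (j+1))
              refine lt_of_lt_of_le ?_ htr
              rw [(hchain j).1]
              exact lt_min hgt hμgt
            exact lt_of_le_of_lt (by rw [hdj1]; exact min_le_left _ _) hbig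
          have := (hkey (j+1)).2.2.2 _ hne0 hdvd
          have : (φ (j+2)).degree < (φ (j+2)).degree :=
            lt_of_le_of_lt this (hdjdeg.trans_le (heq'.symm.trans hd2).le)
          exact absurd this (lt_irrefl _)
        exact le_antisymm hle hge
  intro i j hij
  rw [(inv i j hij).1, (hchain i).1]
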